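/- Let Ω ⊂ ℝ^n be compact with 0 in its interior Ω°, let g : Ω → ℝ^n be Lipschitz continuous with g(0) = 0, and let V : Ω → ℝ be Lipschitz continuous with V(0) = 0. Suppose there are constants a, b₁, b₂ > 0 such that b₁‖y‖^a ≤ V(y) for all y ∈ Ω and D⁺V(y) ≤ −b₂ V(y) for all y ∈ Ω° \ {0}, where D⁺V(y) := limsup_{h→0⁺}(V(y + h·g(y)) − V(y))/h. Let r > 0 be such that the sublevel set 𝒜 := {y ∈ Ω : V(y) ≤ r} is contained in Ω°. Then for every continuous x : [t₀, T) → Ω that is differentiable with x'(t) = g(x(t)) for all t ∈ [t₀, T) and satisfies x(t₀) ∈ 𝒜, one has x(t) ∈ 𝒜 for all t ∈ [t₀, T) and ‖x(t)‖ ≤ (r/b₁)^{1/a} · e^{−(b₂/a)(t − t₀)} for all t ∈ [t₀, T). -/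

import Mathlib

set_option maxHeartbeats 1000000


open Filter Topology Set
open scoped BigOperators

/-- exponential stability with invariant sublevel set: under Lyapunov
conditions with a Lipschitz CPA-type function `V`, every solution starting in the
sublevel set `𝒜 = {y ∈ Ω : V(y) ≤ r} ⊆ Ω°` stays in `𝒜` and satisfies
`‖x(t)‖ ≤ (r/b₁)^{1/a} e^{−(b₂/a)(t−t₀)}`.  (`T ≤ ∞` is encoded as `T : EReal`.) -/
theorem stmt7 (n : ℕ)
    (Ω : Set (EuclideanSpace ℝ (Fin n))) (hΩc : IsCompact Ω)
    (h0 : (0 : EuclideanSpace ℝ (Fin n)) ∈ interior Ω)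
    (g : EuclideanSpace ℝ (Fin n) → EuclideanSpace ℝ (Fin n))
    (hg : ∃ L : ℝ, 0 ≤ L ∧ ∀ y ∈ Ω, ∀ y' ∈ Ω, ‖g y - g y'‖ ≤ L * ‖y - y'‖)
    (hg0 : g 0 = 0)
    (V : EuclideanSpace ℝ (Fin n) → ℝ)
    (hVlip : ∃ L : ℝ, 0 ≤ L ∧ ∀ y ∈ Ω, ∀ y' ∈ Ω, |V y - V y'| ≤ L * ‖y - y'‖)
    (hV0 : V 0 = 0)
    (a b₁ b₂ : ℝ) (ha : 0 < a) (hb₁ : 0 < b₁) (hb₂ : 0 < b₂)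
    (hlow : ∀ y ∈ Ω, b₁ * ‖y‖ ^ a ≤ V y)
    (hdini : ∀ y ∈ interior Ω, y ≠ 0 →
      Filter.limsup (fun h : ℝ => (((V (y + h • g y) - V y) / h : ℝ) : EReal)) (𝓝[>] (0 : ℝ))
        ≤ ((-b₂ * V y : ℝ) : EReal))
    (r : ℝ) (hr : 0 < r)
    (hA : {y | y ∈ Ω ∧ V y ≤ r} ⊆ interior Ω)
    -- a solution x : [t₀, T) → Ω of ẋ = g(x) starting in 𝒜
    (t₀ : ℝ) (T : EReal) (hT : (t₀ : EReal) < T)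
    (x : ℝ → EuclideanSpace ℝ (Fin n))
    (hmem : ∀ t : ℝ, t₀ ≤ t → (t : EReal) < T → x t ∈ Ω)
    (hode : ∀ t : ℝ, t₀ ≤ t → (t : EReal) < T →
      HasDerivWithinAt x (g (x t)) {s : ℝ | t₀ ≤ s ∧ (s : EReal) < T} t)
    (hinit : x t₀ ∈ Ω ∧ V (x t₀) ≤ r) :
    ∀ t : ℝ, t₀ ≤ t → (t : EReal) < T →
      (x t ∈ Ω ∧ V (x t) ≤ r) ∧
      ‖x t‖ ≤ (r / b₁) ^ (1 / a) * Real.exp (-(b₂ / a) * (t - t₀)) := by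
  obtain ⟨L, hL0, hL⟩ := hVlip
  -- V is continuous on Ω
  have hVcont : ContinuousOn V Ω := by
    have : LipschitzOnWith (Real.toNNReal L) V Ω := by
      rw [lipschitzOnWith_iff_dist_le_mul]
      intro p hp q hq
      rw [Real.dist_eq, dist_eq_norm, Real.coe_toNNReal L hL0]
      exact hL p hp q hq
    exact this.continuousOn
  -- the key quantitative statement on compact subintervals
  have key : ∀ s : ℝ, t₀ ≤ s → (s : EReal) < T →
      ∀ u ∈ Icc t₀ s, V (x u) ≤ r ∧ V (x u) ≤ r * Real.exp (-b₂ * (u - t₀)) := by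
    intro s hs0 hsT
    set S : Set ℝ := {u : ℝ | t₀ ≤ u ∧ (u : EReal) < T} with hS
    have hSsub : Icc t₀ s ⊆ S := by
      intro u hu
      exact ⟨hu.1, lt_of_le_of_lt (by exact_mod_cast hu.2) hsT⟩
    have hxcont : ContinuousOn x (Icc t₀ s) := by
      intro u hu
      exact ((hode u (hSsub hu).1 (hSsub hu).2).continuousWithinAt).mono hSsub
    have hxΩ : ∀ u ∈ Icc t₀ s, x u ∈ Ω := fun u hu => hmem u (hSsub hu).1 (hSsub hu).2
    have hWcont : ContinuousOn (fun u => V (x u)) (Icc t₀ s) :=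
      hVcont.comp hxcont hxΩ
    -- the slope lemma: the upper right Dini derivative of t ↦ V(x t) is ≤ -b₂ V(x t)
    have hslope : ∀ t, t₀ ≤ t → t < s → x t ∈ interior Ω →
        ∀ c : ℝ, -b₂ * V (x t) < c →
        ∀ᶠ h in 𝓝[>] (0 : ℝ), (V (x (t + h)) - V (x t)) / h < c := by
      intro t ht0 hts hxint c hc
      have htT : (t : EReal) < T := lt_of_le_of_lt (by exact_mod_cast hts.le) hsT
      have hodet := hode t ht0 htT
      -- h ↦ t + h maps 𝓝[>]0 into 𝓝[S] t
      have hIoo : Ioo (0 : ℝ) (s - t) ∈ 𝓝[>] (0 : ℝ) :=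
        Ioo_mem_nhdsGT_of_mem ⟨le_refl 0, sub_pos.2 hts⟩
      have hmemS : ∀ᶠ h in 𝓝[>] (0 : ℝ), t + h ∈ S ∧ t + h ∈ Icc t₀ s ∧ 0 < h := by
        filter_upwards [hIoo] with h hh
        have h1 : t₀ ≤ t + h := le_trans ht0 (by linarith [hh.1])
        have h2 : t + h ≤ s := by linarith [hh.2]
        exact ⟨⟨h1, lt_of_le_of_lt (by exact_mod_cast h2) hsT⟩, ⟨h1, h2⟩, hh.1⟩
      have hmap : Tendsto (fun h : ℝ => t + h) (𝓝[>] (0 : ℝ)) (𝓝[S] t) := by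
        apply tendsto_nhdsWithin_of_tendsto_nhds_of_eventually_within
        · have : Tendsto (fun h : ℝ => t + h) (𝓝 (0 : ℝ)) (𝓝 t) := by
            simpa using (continuous_add_left t).tendsto (0 : ℝ)
          exact this.mono_left nhdsWithin_le_nhds
        · filter_upwards [hmemS] with h hh using hh.1
      -- the error term tends to 0
      have herr : Tendsto (fun h : ℝ => ‖x (t + h) - x t - h • g (x t)‖ / h)
          (𝓝[>] (0 : ℝ)) (𝓝 0) := by
        have h1 := (hasDerivWithinAt_iff_tendsto.1 hodet).comp hmap
        apply h1.congr'
        filter_upwards [self_mem_nhdsWithin] with h (hh : (0 : ℝ) < h)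
        simp only [Function.comp, add_sub_cancel_left]
        rw [Real.norm_eq_abs, abs_of_pos hh, div_eq_inv_mul]
      -- straight-line point is in Ω for small h
      have hq : ∀ᶠ h in 𝓝[>] (0 : ℝ), x t + h • g (x t) ∈ Ω := by
        have hcont : Tendsto (fun h : ℝ => x t + h • g (x t)) (𝓝 (0 : ℝ)) (𝓝 (x t)) := by
          have : Continuous (fun h : ℝ => x t + h • g (x t)) := by continuity
          have := this.tendsto (0 : ℝ)
          simpa using this
        have := hcont.eventually_mem (mem_interior_iff_mem_nhds.1 hxint)
        exact this.filter_mono nhdsWithin_le_nhds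
      set c' := (-b₂ * V (x t) + c) / 2 with hc'def
      have hc'1 : -b₂ * V (x t) < c' := by simp only [hc'def]; linarith
      have hc'2 : c' < c := by simp only [hc'def]; linarith
      -- the first-order term
      have hfirst : ∀ᶠ h in 𝓝[>] (0 : ℝ), (V (x t + h • g (x t)) - V (x t)) / h < c' := by
        by_cases hy0 : x t = 0
        · have hz : ∀ h : ℝ, (V (x t + h • g (x t)) - V (x t)) / h = 0 := by
            intro h
            rw [hy0, hg0, smul_zero, add_zero, sub_self, zero_div]
          have hV0' : V (x t) = 0 := by rw [hy0, hV0]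
          filter_upwards with h
          rw [hz h]
          rw [hV0'] at hc'1
          linarith
        · have hls := hdini (x t) hxint hy0
          have hlt : Filter.limsup
              (fun h : ℝ => (((V (x t + h • g (x t)) - V (x t)) / h : ℝ) : EReal))
              (𝓝[>] (0 : ℝ)) < (c' : EReal) :=
            lt_of_le_of_lt hls (by exact_mod_cast hc'1)
          have hev := Filter.eventually_lt_of_limsup_lt hlt
          filter_upwards [hev] with h hh
          exact_mod_cast hh
      have hpos : (0 : ℝ) < c - c' := by linarith
      have herr2 : ∀ᶠ h in 𝓝[>] (0 : ℝ),
          L * (‖x (t + h) - x t - h • g (x t)‖ / h) < c - c' := by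
        have hbd : (0 : ℝ) < (c - c') / (L + 1) := div_pos hpos (by linarith)
        have := herr.eventually (gt_mem_nhds hbd)
        filter_upwards [this, self_mem_nhdsWithin] with h hh (hh' : (0 : ℝ) < h)
        have hnn : (0 : ℝ) ≤ ‖x (t + h) - x t - h • g (x t)‖ / h :=
          div_nonneg (norm_nonneg _) hh'.le
        have h1 : L * (‖x (t + h) - x t - h • g (x t)‖ / h) ≤ L * ((c - c') / (L + 1)) :=
          mul_le_mul_of_nonneg_left hh.le hL0
        have h2 : L * ((c - c') / (L + 1)) < (L + 1) * ((c - c') / (L + 1)) :=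
          mul_lt_mul_of_pos_right (by linarith) hbd
        have h3 : (L + 1) * ((c - c') / (L + 1)) = c - c' := by
          field_simp
        linarith
      filter_upwards [hfirst, herr2, hmemS, hq] with h h1 h2 h3 h5
      obtain ⟨hS', hIcc', hhpos⟩ := h3
      have hxh : x (t + h) ∈ Ω := hxΩ _ hIcc'
      have hVle : V (x (t + h)) - V (x t) ≤
          (V (x t + h • g (x t)) - V (x t)) + L * ‖x (t + h) - x t - h • g (x t)‖ := by
        have habs := hL (x (t + h)) hxh (x t + h • g (x t)) h5
        have h6 := (abs_le.1 habs).2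
        have h7 : x (t + h) - (x t + h • g (x t)) = x (t + h) - x t - h • g (x t) := by
          abel
        rw [h7] at h6
        linarith
      have hdiv : (V (x (t + h)) - V (x t)) / h ≤
          (V (x t + h • g (x t)) - V (x t)) / h +
            L * (‖x (t + h) - x t - h • g (x t)‖ / h) := by
        rw [← mul_div_assoc, ← add_div]
        exact div_le_div_of_nonneg_right hVle hhpos.le |>.trans_eq rfl
      calc (V (x (t + h)) - V (x t)) / h
          ≤ (V (x t + h • g (x t)) - V (x t)) / h +
              L * (‖x (t + h) - x t - h • g (x t)‖ / h) := hdiv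
        _ < c' + (c - c') := add_lt_add h1 h2
        _ = c := by ring
    -- barrier lemma: if V(x ·) ≤ r on [t₀,t₁], then exponential bound there
    have barrier : ∀ t₁ ∈ Icc t₀ s, (∀ u ∈ Icc t₀ t₁, V (x u) ≤ r) →
        ∀ u ∈ Icc t₀ t₁, V (x u) ≤ r * Real.exp (-b₂ * (u - t₀)) := by
      intro t₁ ht₁ hbd u hu
      have hIcc₁ : Icc t₀ t₁ ⊆ Icc t₀ s := Icc_subset_Icc le_rfl ht₁.2
      refine le_of_forall_pos_le_add fun ε hε => ?_
      set B : ℝ → ℝ := fun t => r * Real.exp (-b₂ * (t - t₀)) + ε with hBdef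
      set B' : ℝ → ℝ := fun t => -b₂ * (r * Real.exp (-b₂ * (t - t₀))) with hB'def
      have hBd : ∀ t : ℝ, HasDerivAt B (B' t) t := by
        intro t
        have h1 : HasDerivAt (fun t : ℝ => -b₂ * (t - t₀)) (-b₂) t := by
          simpa using ((hasDerivAt_id t).sub_const t₀).const_mul (-b₂)
        have h2 := h1.exp
        have h3 := (h2.const_mul r).add_const ε
        refine h3.congr_deriv ?_
        simp only [hB'def]
        ring
      have := image_le_of_liminf_slope_right_lt_deriv_boundary'
        (f := fun u => V (x u)) (f' := fun t => -b₂ * V (x t)) (a := t₀) (b := t₁)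
        (hWcont.mono hIcc₁)
        (by
          intro t ht ρ hρ
          have htmem : t ∈ Icc t₀ t₁ := ⟨ht.1, ht.2.le⟩
          have hxi : x t ∈ interior Ω := hA ⟨hxΩ t (hIcc₁ htmem), hbd t htmem⟩
          have hts' : t < s := lt_of_lt_of_le ht.2 ht₁.2
          have hev := hslope t ht.1 hts' hxi ρ hρ
          have hmapz : Tendsto (fun z : ℝ => z - t) (𝓝[>] t) (𝓝[>] (0 : ℝ)) := by
            apply tendsto_nhdsWithin_of_tendsto_nhds_of_eventually_within
            · have : Tendsto (fun z : ℝ => z - t) (𝓝 t) (𝓝 (t - t)) :=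
                (continuous_id.sub continuous_const).tendsto t
              rw [sub_self] at this
              exact this.mono_left nhdsWithin_le_nhds
            · filter_upwards [self_mem_nhdsWithin] with z hz
              exact sub_pos.2 (mem_Ioi.mp hz)
          have hev2 := hmapz.eventually hev
          apply Filter.Eventually.frequently
          filter_upwards [hev2, self_mem_nhdsWithin] with z hz (hz' : t < z)
          rw [slope_def_field]
          have : t + (z - t) = z := by ring
          rw [this] at hz
          exact hz
          )
        (B := B) (B' := B')
        (by
          simp only [hBdef, sub_self, mul_zero, neg_zero, Real.exp_zero, mul_one]
          linarith [hinit.2])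
        (Continuous.continuousOn (by fun_prop))
        (fun t _ => (hBd t).hasDerivWithinAt)
        (by
          intro t ht heq
          have heq' : V (x t) = r * Real.exp (-b₂ * (t - t₀)) + ε := heq
          show -b₂ * V (x t) < -b₂ * (r * Real.exp (-b₂ * (t - t₀)))
          rw [heq']
          nlinarith [Real.exp_pos (-b₂ * (t - t₀)), mul_pos hb₂ hε])
      exact this hu
    -- invariance of the sublevel set, via a sup argument
    have hinv : ∀ u ∈ Icc t₀ s, V (x u) ≤ r := by
      -- extension lemma: strict sublevel at t < s extends a bit to the right
      have hext : ∀ t, t ∈ Icc t₀ s → t < s → V (x t) < r →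
          ∃ t', t < t' ∧ t' ≤ s ∧ ∀ u ∈ Ioc t t', V (x u) ≤ r := by
        intro t ht hts hVlt
        have hc : ContinuousWithinAt (fun u => V (x u)) (Icc t₀ s) t := hWcont t ht
        have hmemf : (fun u => V (x u)) ⁻¹' (Iio r) ∈ 𝓝[Icc t₀ s] t :=
          hc (Iio_mem_nhds hVlt)
        obtain ⟨ε, hε, hball⟩ := Metric.mem_nhdsWithin_iff.1 hmemf
        refine ⟨min (t + ε / 2) s, lt_min (by linarith) hts, min_le_right _ _, ?_⟩
        intro u hu
        have hu1 : t < u := hu.1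
        have hu2 : u ≤ t + ε / 2 := le_trans hu.2 (min_le_left _ _)
        have hu3 : u ≤ s := le_trans hu.2 (min_le_right _ _)
        have huIcc : u ∈ Icc t₀ s := ⟨le_trans ht.1 hu1.le, hu3⟩
        have hub : u ∈ Metric.ball t ε := by
          rw [Metric.mem_ball, Real.dist_eq, abs_of_pos (sub_pos.2 hu1)]
          linarith
        exact (hball ⟨hub, huIcc⟩).le
      set S2 : Set ℝ := {t | t ∈ Icc t₀ s ∧ ∀ u ∈ Icc t₀ t, V (x u) ≤ r} with hS2def
      have hne : t₀ ∈ S2 := by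
        refine ⟨⟨le_rfl, hs0⟩, fun u hu => ?_⟩
        have : u = t₀ := le_antisymm hu.2 hu.1
        rw [this]; exact hinit.2
      have hbdd : BddAbove S2 := ⟨s, fun t ht => ht.1.2⟩
      set τ := sSup S2 with hτdef
      have hτmem : τ ∈ Icc t₀ s :=
        ⟨le_csSup hbdd hne, csSup_le ⟨t₀, hne⟩ fun t ht => ht.1.2⟩
      have hτS : ∀ u ∈ Icc t₀ τ, V (x u) ≤ r := by
        have hlt : ∀ u, t₀ ≤ u → u < τ → V (x u) ≤ r := by
          intro u hu0 huτ
          obtain ⟨t, htS2, hut⟩ := exists_lt_of_lt_csSup ⟨t₀, hne⟩ huτ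
          exact htS2.2 u ⟨hu0, hut.le⟩
        intro u hu
        rcases eq_or_lt_of_le hu.2 with h | h
        · rcases eq_or_lt_of_le hu.1 with h0 | h0
          · rw [← h0]; exact hinit.2
          · have hus : u ≤ s := hu.2.trans hτmem.2
            have hnb : (𝓝[Ico t₀ u] u).NeBot := by
              rw [nhdsWithin_Ico_eq_nhdsLT h0]
              infer_instance
            have htd : Tendsto (fun v => V (x v)) (𝓝[Ico t₀ u] u) (𝓝 (V (x u))) :=
              (hWcont u ⟨hu.1, hus⟩).mono fun v hv => ⟨hv.1, hv.2.le.trans hus⟩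
            refine le_of_tendsto htd ?_
            filter_upwards [self_mem_nhdsWithin] with v hv
            exact hlt v hv.1 (lt_of_lt_of_le hv.2 hu.2)
        · exact hlt u hu.1 h
      have hτs : τ = s := by
        by_contra hne'
        have hτlt : τ < s := lt_of_le_of_ne hτmem.2 hne'
        have hτS2 : τ ∈ S2 := ⟨hτmem, hτS⟩
        -- obtain an extension beyond τ
        have hstep : ∃ t', τ < t' ∧ t' ≤ s ∧ ∀ u ∈ Ioc τ t', V (x u) ≤ r := by
          rcases eq_or_lt_of_le hτmem.1 with hτ0 | hτ0
          · -- τ = t₀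
            rcases lt_or_eq_of_le hinit.2 with hWr | hWr
            · have := hext τ hτmem hτlt (by rw [← hτ0]; exact hWr)
              exact this
            · -- V (x t₀) = r : use the decrease of V along the flow at t₀
              have hx0A : x t₀ ∈ interior Ω := hA ⟨hinit.1, hinit.2⟩
              have hx0ne : x t₀ ≠ 0 := by
                intro h
                rw [h, hV0] at hWr
                exact absurd hWr.symm (ne_of_gt hr)
              have hc0 : -b₂ * V (x t₀) < 0 := by
                rw [hWr]; exact mul_neg_of_neg_of_pos (neg_lt_zero.2 hb₂) hr
              have hev := hslope t₀ le_rfl (hτ0 ▸ hτlt) hx0A 0 hc0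
              have hIoo : Ioo (0 : ℝ) (s - t₀) ∈ 𝓝[>] (0 : ℝ) :=
                Ioo_mem_nhdsGT_of_mem ⟨le_refl 0, sub_pos.2 (hτ0 ▸ hτlt)⟩
              obtain ⟨δ, hδpos, hδ⟩ := mem_nhdsGT_iff_exists_Ioc_subset.1
                (inter_mem hev hIoo)
              refine ⟨t₀ + min δ (s - t₀) / 2, by
                  rw [← hτ0]
                  have : 0 < min δ (s - t₀) := lt_min hδpos (sub_pos.2 (hτ0 ▸ hτlt))
                  linarith, by
                  have : min δ (s - t₀) ≤ s - t₀ := min_le_right _ _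
                  linarith, ?_⟩
              intro u hu
              rw [← hτ0] at hu
              have hh1 : 0 < u - t₀ := sub_pos.2 hu.1
              have hh2 : u - t₀ ≤ min δ (s - t₀) / 2 := by linarith [hu.2]
              have hmin : 0 < min δ (s - t₀) := lt_min hδpos (sub_pos.2 (hτ0 ▸ hτlt))
              have hmem' : u - t₀ ∈ Ioc (0 : ℝ) δ :=
                ⟨hh1, le_trans hh2 (by
                  have := min_le_left δ (s - t₀); linarith)⟩
              have : (V (x (t₀ + (u - t₀))) - V (x t₀)) / (u - t₀) < 0 := (hδ hmem').1
              rw [show t₀ + (u - t₀) = u by ring] at this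
              have hdivneg : V (x u) - V (x t₀) < 0 := by
                by_contra hcon
                push_neg at hcon
                exact absurd this (not_lt.2 (div_nonneg hcon hh1.le))
              rw [← hWr]
              linarith
          · -- τ > t₀ : strict decrease from the barrier bound
            have hbar := barrier τ hτmem hτS τ ⟨hτmem.1, le_rfl⟩
            have hexp : Real.exp (-b₂ * (τ - t₀)) < 1 := by
              rw [Real.exp_lt_one_iff]
              have : 0 < τ - t₀ := sub_pos.2 hτ0
              nlinarith
            have hVτ : V (x τ) < r := lt_of_le_of_lt hbar (by nlinarith)
            exact hext τ hτmem hτlt hVτ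
        obtain ⟨t', ht'1, ht'2, ht'3⟩ := hstep
        have ht'S2 : t' ∈ S2 := by
          refine ⟨⟨le_trans hτmem.1 ht'1.le, ht'2⟩, fun u hu => ?_⟩
          rcases le_or_gt u τ with h | h
          · exact hτS u ⟨hu.1, h⟩
          · exact ht'3 u ⟨h, hu.2⟩
        exact absurd (le_csSup hbdd ht'S2) (not_le.2 ht'1)
      intro u hu
      exact hτS u ⟨hu.1, by rw [hτs]; exact hu.2⟩
    intro u hu
    exact ⟨hinv u hu, barrier s ⟨hs0, le_rfl⟩ hinv u hu⟩
  -- conclude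
  intro t ht0 htT
  obtain ⟨hVr, hVexp⟩ := key t ht0 htT t ⟨ht0, le_rfl⟩
  refine ⟨⟨hmem t ht0 htT, hVr⟩, ?_⟩
  have hxt : x t ∈ Ω := hmem t ht0 htT
  have hlow' : b₁ * ‖x t‖ ^ a ≤ V (x t) := hlow _ hxt
  have hNa : ‖x t‖ ^ a ≤ r / b₁ * Real.exp (-b₂ * (t - t₀)) := by
    rw [div_mul_eq_mul_div, le_div_iff₀ hb₁]
    nlinarith
  have hxnn : (0 : ℝ) ≤ ‖x t‖ := norm_nonneg _
  have h1 : ‖x t‖ = (‖x t‖ ^ a) ^ (1 / a) := by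
    rw [← Real.rpow_mul hxnn, mul_one_div_cancel (ne_of_gt ha), Real.rpow_one]
  rw [h1]
  have h2 : (‖x t‖ ^ a) ^ (1 / a) ≤ (r / b₁ * Real.exp (-b₂ * (t - t₀))) ^ (1 / a) :=
    Real.rpow_le_rpow (Real.rpow_nonneg hxnn a) hNa (by positivity)
  refine h2.trans_eq ?_
  rw [Real.mul_rpow (by positivity) (Real.exp_pos _).le, ← Real.exp_mul]
  congr 1
  field_simp
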